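/- arXiv:2212.04166 — 2 statements merged into one kernel-verified Lean document; each statement's English description precedes it below -/
import Mathlib

section
/- With the gluing construction J, if u'_i ∈ V(G_i) \ {u_i} is maximally distant from u_i in G_i, then u'_i is maximally distant in J from every vertex v' of J lying outside G_i. -/
open SimpleGraph

/-- `y` is maximally distant from `x` in `G`: no neighbor of `y` is farther from `x` than `y`. -/
def MaxDistantFrom {V : Type*} (G : SimpleGraph V) (y x : V) : Prop :=
  ∀ z, G.Adj y z → G.dist z x ≤ G.dist y x

/-- `u` and `v` are mutually maximally distant in `G`. -/
def MutuallyMaxDistant {V : Type*} (G : SimpleGraph V) (u v : V) : Prop :=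
  MaxDistantFrom G u v ∧ MaxDistantFrom G v u

/-- The strong resolving graph of `G`: edges are the mutually maximally distant pairs. -/
def srGraph {V : Type*} (G : SimpleGraph V) : SimpleGraph V where
  Adj u v := u ≠ v ∧ MutuallyMaxDistant G u v
  symm := ⟨fun u v h => ⟨h.1.symm, h.2.2, h.2.1⟩⟩
  loopless := ⟨fun u h => h.1 rfl⟩

/-- `w` strongly resolves `u` and `v`: `v` lies on a shortest `w`–`u` path, or
`u` lies on a shortest `w`–`v` path. -/
def StronglyResolves {V : Type*} (G : SimpleGraph V) (w u v : V) : Prop :=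
  G.dist w v + G.dist v u = G.dist w u ∨ G.dist w u + G.dist u v = G.dist w v

/-- `R` is a strong resolving set for `G`. -/
def StrongResolvingSet {V : Type*} (G : SimpleGraph V) (R : Set V) : Prop :=
  ∀ u v : V, u ≠ v → ∃ w ∈ R, StronglyResolves G w u v
/-- The graph obtained from the disjoint union of the graphs `G i` and `H` by identifying,
for each `i`, the vertex `u i` of `G i` with the vertex `v i` of `H`.  The vertices of
`G i` other than `u i` keep their identity (as `Sum.inl ⟨i, x⟩`), the vertices of `H`
keep their identity (as `Sum.inr w`), and `u i` is identified with `v i`. -/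
def glue {k : ℕ} {α : Fin k → Type*} {β : Type*}
    (G : ∀ i, SimpleGraph (α i)) (H : SimpleGraph β) (u : ∀ i, α i) (v : Fin k → β) :
    SimpleGraph ((Σ i, {x : α i // x ≠ u i}) ⊕ β) where
  Adj a b :=
    (∃ (i : Fin k) (x y : {z : α i // z ≠ u i}), (G i).Adj x.1 y.1 ∧
        a = Sum.inl ⟨i, x⟩ ∧ b = Sum.inl ⟨i, y⟩) ∨
    (∃ (i : Fin k) (x : {z : α i // z ≠ u i}), (G i).Adj x.1 (u i) ∧
        ((a = Sum.inl ⟨i, x⟩ ∧ b = Sum.inr (v i)) ∨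
         (b = Sum.inl ⟨i, x⟩ ∧ a = Sum.inr (v i)))) ∨
    (∃ w w' : β, H.Adj w w' ∧ a = Sum.inr w ∧ b = Sum.inr w')
  symm := by
    refine ⟨?_⟩
    rintro a b (⟨i, x, y, hxy, ha, hb⟩ | ⟨i, x, hx, h | h⟩ | ⟨w, w', hww, ha, hb⟩)
    · exact Or.inl ⟨i, y, x, hxy.symm, hb, ha⟩
    · exact Or.inr (Or.inl ⟨i, x, hx, Or.inr h⟩)
    · exact Or.inr (Or.inl ⟨i, x, hx, Or.inl h⟩)
    · exact Or.inr (Or.inr ⟨w', w, hww.symm, hb, ha⟩)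
  loopless := by
    refine ⟨?_⟩
    rintro a (⟨i, x, y, hxy, ha, hb⟩ | ⟨i, x, _, ⟨ha, hb⟩ | ⟨ha, hb⟩⟩ | ⟨w, w', hww, ha, hb⟩)
    · subst ha
      injection hb with h
      injection h with h1 h2
      subst h2
      exact (G i).loopless.irrefl _ hxy
    · subst ha; simp at hb
    · subst ha; simp at hb
    · subst ha
      injection hb with h
      subst h
      exact H.loopless.irrefl _ hww


section GlueAux

variable {k : ℕ} {α : Fin k → Type*} {β : Type*}
variable (G : ∀ i, SimpleGraph (α i)) (H : SimpleGraph β) (u : ∀ i, α i) (v : Fin k → β)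

open Classical in
/-- The natural homomorphism from `G j` into the glued graph. -/
noncomputable def glueHomG (j : Fin k) : G j →g glue G H u v where
  toFun z := if h : z = u j then Sum.inr (v j) else Sum.inl ⟨j, ⟨z, h⟩⟩
  map_rel' := by
    intro a b hab
    by_cases ha : a = u j
    · subst ha
      have hb : b ≠ u j := fun h => (G j).loopless.irrefl _ (h ▸ hab)
      rw [dif_pos rfl, dif_neg hb]
      exact Or.inr (Or.inl ⟨j, ⟨b, hb⟩, hab.symm, Or.inr ⟨rfl, rfl⟩⟩)
    · by_cases hb : b = u j
      · subst hb
        rw [dif_neg ha, dif_pos rfl]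
        exact Or.inr (Or.inl ⟨j, ⟨a, ha⟩, hab, Or.inl ⟨rfl, rfl⟩⟩)
      · rw [dif_neg ha, dif_neg hb]
        exact Or.inl ⟨j, ⟨a, ha⟩, ⟨b, hb⟩, hab, rfl, rfl⟩

/-- The natural homomorphism from `H` into the glued graph. -/
def glueHomH : H →g glue G H u v where
  toFun := Sum.inr
  map_rel' := fun hab => Or.inr (Or.inr ⟨_, _, hab, rfl, rfl⟩)

lemma glueHomG_apply_ne (j : Fin k) (y : {z : α j // z ≠ u j}) :
    glueHomG G H u v j y.1 = Sum.inl ⟨j, y⟩ :=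
  dif_neg y.2

lemma glueHomG_apply_u (j : Fin k) :
    glueHomG G H u v j (u j) = Sum.inr (v j) :=
  dif_pos rfl

lemma glue_connected (hGc : ∀ i, (G i).Connected) (hHc : H.Connected) :
    (glue G H u v).Connected := by
  have hne : Nonempty β := hHc.nonempty
  haveI : Nonempty ((Σ i, {x : α i // x ≠ u i}) ⊕ β) := ⟨Sum.inr hne.some⟩
  constructor
  · intro a b
    have key : ∀ a : (Σ i, {x : α i // x ≠ u i}) ⊕ β,
        ∃ w : β, (glue G H u v).Reachable a (Sum.inr w) := by
      rintro (⟨j, y⟩ | w)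
      · refine ⟨v j, ?_⟩
        have := ((hGc j).preconnected y.1 (u j)).map (glueHomG G H u v j)
        rwa [glueHomG_apply_ne, glueHomG_apply_u] at this
      · exact ⟨w, Reachable.refl _⟩
    obtain ⟨w, hw⟩ := key a
    obtain ⟨w', hw'⟩ := key b
    exact hw.trans ((((hHc.preconnected w w')).map (glueHomH G H u v)).trans hw'.symm)

lemma glue_dist_inl_inr (hGc : ∀ i, (G i).Connected) (j : Fin k) (y : {z : α j // z ≠ u j}) :
    (glue G H u v).dist (Sum.inl ⟨j, y⟩) (Sum.inr (v j)) ≤ (G j).dist y.1 (u j) := by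
  obtain ⟨p, hp⟩ := ((hGc j).preconnected y.1 (u j)).exists_walk_length_eq_dist
  have := SimpleGraph.dist_le (p.map (glueHomG G H u v j))
  rwa [Walk.length_map, hp, glueHomG_apply_ne, glueHomG_apply_u] at this

lemma glue_dist_lower (hGc : ∀ i, (G i).Connected) (i : Fin k) :
    ∀ {a b : (Σ i, {x : α i // x ≠ u i}) ⊕ β} (W : (glue G H u v).Walk a b),
      (∀ y : {z : α i // z ≠ u i}, b ≠ Sum.inl ⟨i, y⟩) →
      ∀ y : {z : α i // z ≠ u i}, a = Sum.inl ⟨i, y⟩ →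
      (G i).dist y.1 (u i) + (glue G H u v).dist (Sum.inr (v i)) b ≤ W.length := by
  intro a b W
  induction W with
  | nil =>
    intro hb y hy
    exact absurd hy (hb y)
  | @cons a c b hac W' ih =>
    intro hb y hy
    subst hy
    rw [Walk.length_cons]
    rcases hac with ⟨j, x', y', hadj, ha, hc⟩ | ⟨j, x', hadj, ⟨ha, hc⟩ | ⟨hc, ha⟩⟩ |
      ⟨w, w', hww, ha, hc⟩
    · injection ha with h
      obtain ⟨h1, h2⟩ := Sigma.mk.inj_iff.mp h
      subst h1
      rw [heq_eq_eq] at h2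
      subst h2
      have h3 := ih hb y' hc
      have h4 : (G i).dist y.1 y'.1 ≤ 1 := by
        simpa using SimpleGraph.dist_le (Walk.cons hadj Walk.nil)
      have h5 := (hGc i).dist_triangle (u := y.1) (v := y'.1) (w := u i)
      omega
    · injection ha with h
      obtain ⟨h1, h2⟩ := Sigma.mk.inj_iff.mp h
      subst h1
      rw [heq_eq_eq] at h2
      subst h2
      subst hc
      have h3 : (G i).dist y.1 (u i) ≤ 1 := by
        simpa using SimpleGraph.dist_le (Walk.cons hadj Walk.nil)
      have h4 := SimpleGraph.dist_le W'
      omega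
    · simp at ha
    · simp at ha

end GlueAux

/-- If `u' ∈ V(G i) \ {u i}` is maximally distant from `u i` in `G i`, then in the glued
graph `J`, `u'` is maximally distant from every vertex lying outside `G i`. -/
theorem glue_maxDistant_of_maxDistant_from_u {k : ℕ} {α : Fin k → Type*} {β : Type*}
    (G : ∀ i, SimpleGraph (α i)) (H : SimpleGraph β)
    (u : ∀ i, α i) (v : Fin k → β)
    (hGc : ∀ i, (G i).Connected) (hHc : H.Connected)
    (hGn : ∀ i, Nontrivial (α i)) (hHn : Nontrivial β)
    (i : Fin k) (x : {z : α i // z ≠ u i}) (hx : MaxDistantFrom (G i) x.1 (u i)) :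
    ∀ b : (Σ i, {x : α i // x ≠ u i}) ⊕ β,
      (∀ y : {z : α i // z ≠ u i}, b ≠ Sum.inl ⟨i, y⟩) →
      MaxDistantFrom (glue G H u v) (Sum.inl ⟨i, x⟩) b := by
  intro b hb z hz
  have hJc : (glue G H u v).Connected := glue_connected G H u v hGc hHc
  obtain ⟨W, hW⟩ := (hJc.preconnected (Sum.inl ⟨i, x⟩) b).exists_walk_length_eq_dist
  have hlow : (G i).dist x.1 (u i) + (glue G H u v).dist (Sum.inr (v i)) b ≤
      (glue G H u v).dist (Sum.inl ⟨i, x⟩) b := by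
    rw [← hW]
    exact glue_dist_lower G H u v hGc i W hb x rfl
  rcases hz with ⟨j, x', y', hadj, ha, hc⟩ | ⟨j, x', hadj, ⟨ha, hc⟩ | ⟨hc, ha⟩⟩ |
    ⟨w, w', hww, ha, hc⟩
  · injection ha with h
    obtain ⟨h1, h2⟩ := Sigma.mk.inj_iff.mp h
    subst h1
    rw [heq_eq_eq] at h2
    subst h2
    subst hc
    have t1 := hJc.dist_triangle (u := Sum.inl ⟨i, y'⟩) (v := Sum.inr (v i)) (w := b)
    have t2 := glue_dist_inl_inr G H u v hGc i y'
    have t3 := hx y'.1 hadj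
    omega
  · injection ha with h
    obtain ⟨h1, h2⟩ := Sigma.mk.inj_iff.mp h
    subst h1
    rw [heq_eq_eq] at h2
    subst h2
    subst hc
    omega
  · simp at ha
  · simp at ha
end

section
/- Let G be the n×m grid graph with n,m ≥ 2, and let x_{i,j} be an inner vertex (1 < i < n, 1 < j < m). Then the set of vertices maximally distant from x_{i,j} is exactly the four corners {x_{1,1}, x_{n,1}, x_{1,m}, x_{n,m}}. -/
open SimpleGraph

/-- The `n × m` grid graph: vertices `(i, j)` with `0 ≤ i < n`, `0 ≤ j < m`,
adjacent iff at Manhattan distance `1`. -/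
def gridGraph (n m : ℕ) : SimpleGraph (Fin n × Fin m) :=
  SimpleGraph.fromRel (fun a b => Nat.dist a.1.1 b.1.1 + Nat.dist a.2.1 b.2.1 = 1)


lemma grid_adj_iff {n m : ℕ} (a b : Fin n × Fin m) :
    (gridGraph n m).Adj a b ↔ Nat.dist a.1.1 b.1.1 + Nat.dist a.2.1 b.2.1 = 1 := by
  constructor
  · rintro ⟨hne, h | h⟩
    · exact h
    · rw [Nat.dist_comm a.1.1, Nat.dist_comm a.2.1]; exact h
  · intro h
    refine ⟨?_, Or.inl h⟩
    rintro rfl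
    simp [Nat.dist_self] at h

lemma grid_step {n m : ℕ} {k : ℕ} (a b : Fin n × Fin m)
    (h : Nat.dist a.1.1 b.1.1 + Nat.dist a.2.1 b.2.1 = k + 1) :
    ∃ c, (gridGraph n m).Adj a c ∧ Nat.dist c.1.1 b.1.1 + Nat.dist c.2.1 b.2.1 = k := by
  rcases lt_trichotomy a.1.1 b.1.1 with h1 | h1 | h1
  · refine ⟨(⟨a.1.1 + 1, lt_of_le_of_lt h1 b.1.2⟩, a.2), ?_, ?_⟩
    · rw [grid_adj_iff]; simp [Nat.dist]
    · simp [Nat.dist] at h ⊢; omega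
  · rcases lt_trichotomy a.2.1 b.2.1 with h2 | h2 | h2
    · refine ⟨(a.1, ⟨a.2.1 + 1, lt_of_le_of_lt h2 b.2.2⟩), ?_, ?_⟩
      · rw [grid_adj_iff]; simp [Nat.dist]
      · simp [Nat.dist] at h ⊢; omega
    · exfalso; simp [Nat.dist] at h; omega
    · refine ⟨(a.1, ⟨a.2.1 - 1, lt_of_le_of_lt (Nat.sub_le _ _) a.2.2⟩), ?_, ?_⟩
      · rw [grid_adj_iff]; simp [Nat.dist] at h ⊢; omega
      · simp [Nat.dist] at h ⊢; omega
  · refine ⟨(⟨a.1.1 - 1, lt_of_le_of_lt (Nat.sub_le _ _) a.1.2⟩, a.2), ?_, ?_⟩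
    · rw [grid_adj_iff]; simp [Nat.dist] at h ⊢; omega
    · simp [Nat.dist] at h ⊢; omega

lemma grid_walk {n m : ℕ} : ∀ (k : ℕ) (a b : Fin n × Fin m),
    Nat.dist a.1.1 b.1.1 + Nat.dist a.2.1 b.2.1 = k →
    ∃ p : (gridGraph n m).Walk a b, p.length = k := by
  intro k
  induction k with
  | zero =>
    intro a b h
    have : a = b := by
      have h1 : a.1.1 = b.1.1 := by simp [Nat.dist] at h; omega
      have h2 : a.2.1 = b.2.1 := by simp [Nat.dist] at h; omega
      exact Prod.ext (Fin.ext h1) (Fin.ext h2)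
    subst this
    exact ⟨SimpleGraph.Walk.nil, rfl⟩
  | succ k ih =>
    intro a b h
    obtain ⟨c, hac, hc⟩ := grid_step a b h
    obtain ⟨p, hp⟩ := ih c b hc
    exact ⟨SimpleGraph.Walk.cons hac p, by simp [hp]⟩

lemma grid_walk_le {n m : ℕ} {a b : Fin n × Fin m} (p : (gridGraph n m).Walk a b) :
    Nat.dist a.1.1 b.1.1 + Nat.dist a.2.1 b.2.1 ≤ p.length := by
  induction p with
  | nil => simp [Nat.dist_self]
  | @cons u v w h p ih =>
    rw [grid_adj_iff] at h
    have t1 := Nat.dist.triangle_inequality u.1.1 v.1.1 w.1.1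
    have t2 := Nat.dist.triangle_inequality u.2.1 v.2.1 w.2.1
    simp only [SimpleGraph.Walk.length_cons]
    omega

lemma grid_dist {n m : ℕ} (a b : Fin n × Fin m) :
    (gridGraph n m).dist a b = Nat.dist a.1.1 b.1.1 + Nat.dist a.2.1 b.2.1 := by
  obtain ⟨p, hp⟩ := grid_walk _ a b rfl
  refine le_antisymm (hp ▸ SimpleGraph.dist_le p) ?_
  obtain ⟨q, hq⟩ := SimpleGraph.Reachable.exists_walk_length_eq_dist ⟨p⟩
  exact hq ▸ grid_walk_le q

/-- In the `n × m` grid (`n, m ≥ 2`), the set of vertices maximally distant from an inner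
vertex is exactly the set of the four corners. -/
theorem grid_maxDistant_from_inner {n m : ℕ} (hn : 2 ≤ n) (hm : 2 ≤ m)
    (x : Fin n × Fin m)
    (hx1 : 0 < x.1.1 ∧ x.1.1 < n - 1) (hx2 : 0 < x.2.1 ∧ x.2.1 < m - 1) :
    {y | MaxDistantFrom (gridGraph n m) y x} =
      {((⟨0, by omega⟩ : Fin n), (⟨0, by omega⟩ : Fin m)),
       ((⟨n - 1, by omega⟩ : Fin n), (⟨0, by omega⟩ : Fin m)),
       ((⟨0, by omega⟩ : Fin n), (⟨m - 1, by omega⟩ : Fin m)),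
       ((⟨n - 1, by omega⟩ : Fin n), (⟨m - 1, by omega⟩ : Fin m))} := by
  have hxb1 := x.1.2
  have hxb2 := x.2.2
  ext y
  have hyb1 := y.1.2
  have hyb2 := y.2.2
  simp only [Set.mem_setOf_eq, MaxDistantFrom, Set.mem_insert_iff, Set.mem_singleton_iff]
  constructor
  · intro h
    have h1 : y.1.1 = 0 ∨ y.1.1 = n - 1 := by
      by_contra hc
      push_neg at hc
      by_cases hcmp : y.1.1 < x.1.1
      · have := h (⟨y.1.1 - 1, by omega⟩, y.2)
          (by rw [grid_adj_iff]; simp [Nat.dist]; omega)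
        rw [grid_dist, grid_dist] at this
        simp [Nat.dist] at this; omega
      · have := h (⟨y.1.1 + 1, by omega⟩, y.2)
          (by rw [grid_adj_iff]; simp [Nat.dist])
        rw [grid_dist, grid_dist] at this
        simp [Nat.dist] at this; omega
    have h2 : y.2.1 = 0 ∨ y.2.1 = m - 1 := by
      by_contra hc
      push_neg at hc
      by_cases hcmp : y.2.1 < x.2.1
      · have := h (y.1, ⟨y.2.1 - 1, by omega⟩)
          (by rw [grid_adj_iff]; simp [Nat.dist]; omega)
        rw [grid_dist, grid_dist] at this
        simp [Nat.dist] at this; omega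
      · have := h (y.1, ⟨y.2.1 + 1, by omega⟩)
          (by rw [grid_adj_iff]; simp [Nat.dist])
        rw [grid_dist, grid_dist] at this
        simp [Nat.dist] at this; omega
    rcases h1 with h1 | h1 <;> rcases h2 with h2 | h2
    · exact Or.inl (Prod.ext (Fin.ext h1) (Fin.ext h2))
    · exact Or.inr (Or.inr (Or.inl (Prod.ext (Fin.ext h1) (Fin.ext h2))))
    · exact Or.inr (Or.inl (Prod.ext (Fin.ext h1) (Fin.ext h2)))
    · exact Or.inr (Or.inr (Or.inr (Prod.ext (Fin.ext h1) (Fin.ext h2))))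
  · intro h
    rcases h with h | h | h | h <;> subst h <;>
    · intro z hz
      rw [grid_adj_iff] at hz
      rw [grid_dist, grid_dist]
      have := z.1.2
      have := z.2.2
      simp [Nat.dist] at hz ⊢
      omega
end
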